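/- For every f ∈ L¹(0,1), one has e^{−|Im z|} ∫_0^1 f(t) e^{iz(2t−1)} dt → 0 as |z| → ∞ in ℂ; that is, for every ε > 0 there exists R > 0 such that |∫_0^1 f(t)e^{iz(2t−1)} dt| ≤ ε e^{|Im z|} whenever |z| ≥ R. -/

import Mathlib

open MeasureTheory Complex Real Filter Set

section Aux

/-- The oscillating kernel, as a function of a real variable. -/
noncomputable def oscKer (z : ℂ) (t : ℝ) : ℂ :=
  Complex.exp (Complex.I * z * (2 * (t : ℂ) - 1))

lemma oscKer_hasDerivAt (z : ℂ) (t : ℝ) :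
    HasDerivAt (oscKer z) (oscKer z t * (2 * Complex.I * z)) t := by
  have h1 : HasDerivAt (fun t : ℝ => (t : ℂ)) 1 t := by
    exact Complex.ofRealCLM.hasDerivAt (x := t)
  have h2 : HasDerivAt (fun t : ℝ => Complex.I * z * (2 * (t : ℂ) - 1))
      (Complex.I * z * 2) t := by
    have := ((h1.const_mul (2 : ℂ)).sub_const 1).const_mul (Complex.I * z)
    simpa [mul_comm, mul_assoc, mul_left_comm] using this
  have h3 := h2.cexp
  unfold oscKer
  convert h3 using 1
  ring

lemma abs_oscKer (z : ℂ) (t : ℝ) :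
    ‖oscKer z t‖ = Real.exp (-z.im * (2 * t - 1)) := by
  rw [oscKer, Complex.norm_exp]
  congr 1
  have : (2 * (t : ℂ) - 1) = ((2 * t - 1 : ℝ) : ℂ) := by push_cast; ring
  rw [this]
  simp [Complex.mul_re, Complex.mul_im]

lemma abs_oscKer_le (z : ℂ) {t : ℝ} (ht0 : 0 ≤ t) (ht1 : t ≤ 1) :
    ‖oscKer z t‖ ≤ Real.exp |z.im| := by
  rw [abs_oscKer]
  apply Real.exp_le_exp.2
  have h1 : |2 * t - 1| ≤ 1 := abs_le.2 ⟨by linarith, by linarith⟩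
  calc -z.im * (2 * t - 1) ≤ |(-z.im) * (2 * t - 1)| := le_abs_self _
    _ = |z.im| * |2 * t - 1| := by rw [abs_mul, abs_neg]
    _ ≤ |z.im| * 1 := by gcongr
    _ = |z.im| := mul_one _

end Aux

/-- **Riemann–Lebesgue type estimate.** For every `f ∈ L¹(0,1)`,
`∫_0^1 f(t) e^{iz(2t-1)} dt = o(e^{|Im z|})` as `|z| → ∞`. -/
theorem integral_isLittleO_exp_abs_im
    (f : ℝ → ℂ) (hf : IntegrableOn f (Set.Ioo (0 : ℝ) 1)) :
    ∀ ε > 0, ∃ R > 0, ∀ z : ℂ, R ≤ ‖z‖ →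
      ‖∫ t in Set.Ioo (0 : ℝ) 1, f t * Complex.exp (Complex.I * z * (2 * t - 1))‖
        ≤ ε * Real.exp |z.im| := by
  intro ε hε
  -- Extend `f` by zero.
  set F : ℝ → ℂ := (Set.Ioo (0 : ℝ) 1).indicator f with hFdef
  have hFint : Integrable F := hf.integrable_indicator measurableSet_Ioo
  -- Approximate by a continuous compactly supported function within ε/4.
  obtain ⟨g, -, hg_sub, g_cont, g_int⟩ :=
    hFint.exists_hasCompactSupport_integral_sub_le (show (0:ℝ) < ε/4 by linarith)
  -- Approximate `g` on `[0,1]` by a complex polynomial within ε/4.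
  obtain ⟨p, hp⟩ := exists_polynomial_near_of_continuousOn 0 1 (fun t => (g t).re)
    ((Complex.continuous_re.comp g_cont).continuousOn) (ε/8) (by linarith)
  obtain ⟨q, hq⟩ := exists_polynomial_near_of_continuousOn 0 1 (fun t => (g t).im)
    ((Complex.continuous_im.comp g_cont).continuousOn) (ε/8) (by linarith)
  set h : ℝ → ℂ := fun t => ((p.eval t : ℝ) : ℂ) + Complex.I * ((q.eval t : ℝ) : ℂ) with hhdef
  set h' : ℝ → ℂ := fun t => ((p.derivative.eval t : ℝ) : ℂ) + Complex.I * ((q.derivative.eval t : ℝ) : ℂ)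
    with hh'def
  have h_cont : Continuous h := by
    apply Continuous.add
    · exact Complex.continuous_ofReal.comp (p.continuous)
    · exact continuous_const.mul (Complex.continuous_ofReal.comp (q.continuous))
  have h'_cont : Continuous h' := by
    apply Continuous.add
    · exact Complex.continuous_ofReal.comp (p.derivative.continuous)
    · exact continuous_const.mul (Complex.continuous_ofReal.comp (q.derivative.continuous))
  have h_deriv : ∀ t : ℝ, HasDerivAt h (h' t) t := by
    intro t
    exact ((p.hasDerivAt t).ofReal_comp).add
      (((q.hasDerivAt t).ofReal_comp).const_mul Complex.I)
  -- pointwise closeness of g and h on [0,1]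
  have hgh : ∀ t ∈ Set.Icc (0:ℝ) 1, ‖g t - h t‖ ≤ ε/4 := by
    intro t ht
    have : g t - h t = ((((g t).re - p.eval t : ℝ)) : ℂ)
        + Complex.I * ((((g t).im - q.eval t : ℝ)) : ℂ) := by
      simp only [hhdef]
      push_cast
      nth_rewrite 1 [← Complex.re_add_im (g t)]
      ring
    rw [this]
    calc ‖_‖ ≤ ‖((((g t).re - p.eval t : ℝ)) : ℂ)‖
          + ‖Complex.I * ((((g t).im - q.eval t : ℝ)) : ℂ)‖ :=
        norm_add_le _ _
      _ = |(g t).re - p.eval t| + |(g t).im - q.eval t| := by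
          simp [← Complex.ofReal_sub, Complex.norm_real]
      _ ≤ ε/8 + ε/8 := by
          have h1 := hp t ht
          have h2 := hq t ht
          rw [abs_sub_comm] at h1 h2
          exact add_le_add h1.le h2.le
      _ = ε/4 := by ring
  -- L¹ bound for f - h on (0,1)
  have hfg_int : ∫ t in Set.Ioo (0:ℝ) 1, ‖f t - g t‖ ≤ ε/4 := by
    have e1 : ∫ t in Set.Ioo (0:ℝ) 1, ‖f t - g t‖ = ∫ t in Set.Ioo (0:ℝ) 1, ‖F t - g t‖ := by
      apply setIntegral_congr_fun measurableSet_Ioo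
      intro t ht
      simp [hFdef, Set.indicator_of_mem ht]
    rw [e1]
    calc ∫ t in Set.Ioo (0:ℝ) 1, ‖F t - g t‖ ≤ ∫ t, ‖F t - g t‖ :=
        setIntegral_le_integral (hFint.sub g_int).norm
          (Filter.Eventually.of_forall fun t => norm_nonneg _)
      _ ≤ ε/4 := hg_sub
  have hgh_int : ∫ t in Set.Ioo (0:ℝ) 1, ‖g t - h t‖ ≤ ε/4 := by
    have : ∫ t in Set.Ioo (0:ℝ) 1, ‖g t - h t‖ ≤ ∫ _t in Set.Ioo (0:ℝ) 1, (ε/4 : ℝ) := by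
      apply setIntegral_mono_on
      · exact ((g_cont.sub h_cont).norm.integrableOn_Icc (a := 0) (b := 1)).mono_set
          Set.Ioo_subset_Icc_self
      · exact integrableOn_const (by simp)
      · exact measurableSet_Ioo
      · intro t ht
        exact hgh t (Set.Ioo_subset_Icc_self ht)
    simpa using this
  have h_int : IntegrableOn h (Set.Ioo (0:ℝ) 1) :=
    (h_cont.integrableOn_Icc (a := 0) (b := 1)).mono_set Set.Ioo_subset_Icc_self
  -- a bound for h' on [0,1]
  obtain ⟨M, hM⟩ := (isCompact_Icc (a := (0:ℝ)) (b := 1)).exists_bound_of_continuousOn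
    h'_cont.continuousOn
  have hM0 : 0 ≤ M := le_trans (norm_nonneg _) (hM 0 (by norm_num))
  set C : ℝ := ‖h 1‖ + ‖h 0‖ + M with hCdef
  have hC0 : 0 ≤ C := by positivity
  refine ⟨max 1 (C/ε), lt_of_lt_of_le one_pos (le_max_left _ _), ?_⟩
  intro z hz
  have hz1 : (1:ℝ) ≤ ‖z‖ := le_trans (le_max_left _ _) hz
  have hzne : z ≠ 0 := by
    intro hz0; rw [hz0] at hz1; simp at hz1; linarith
  have hzabs : (0:ℝ) < ‖z‖ := lt_of_lt_of_le one_pos hz1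
  set eIm : ℝ := Real.exp |z.im| with heIm
  have heIm1 : (1:ℝ) ≤ eIm := Real.one_le_exp (abs_nonneg _)
  have heIm0 : (0:ℝ) < eIm := lt_of_lt_of_le one_pos heIm1
  -- integrability of the products
  have hE_bd : ∀ t ∈ Set.Ioo (0:ℝ) 1, ‖oscKer z t‖ ≤ eIm := fun t ht =>
    abs_oscKer_le z ht.1.le ht.2.le
  have hE_cont : Continuous (oscKer z) := by
    apply Complex.continuous_exp.comp
    exact (continuous_const.mul ((continuous_const.mul Complex.continuous_ofReal).sub
      continuous_const))
  have hfE_int : IntegrableOn (fun t => f t * oscKer z t) (Set.Ioo (0:ℝ) 1) := by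
    have := Integrable.bdd_mul (c := eIm) hf hE_cont.aestronglyMeasurable.restrict
      ((ae_restrict_iff' measurableSet_Ioo).2 (Filter.Eventually.of_forall hE_bd))
    exact this.congr (Filter.Eventually.of_forall fun t => mul_comm _ _)
  have hhE_int : IntegrableOn (fun t => h t * oscKer z t) (Set.Ioo (0:ℝ) 1) :=
    ((h_cont.mul hE_cont).integrableOn_Icc (a := 0) (b := 1)).mono_set Set.Ioo_subset_Icc_self
  have hsub_int : IntegrableOn (fun t => (f t - h t) * oscKer z t) (Set.Ioo (0:ℝ) 1) := by
    simpa [sub_mul, Pi.sub_def] using hfE_int.sub hhE_int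
  -- split the integral
  have hsplit : (∫ t in Set.Ioo (0 : ℝ) 1, f t * oscKer z t)
      = (∫ t in Set.Ioo (0:ℝ) 1, (f t - h t) * oscKer z t)
        + ∫ t in Set.Ioo (0:ℝ) 1, h t * oscKer z t := by
    rw [← integral_add hsub_int hhE_int]
    congr 1
    ext t
    ring
  -- bound the first piece
  have hA : ‖∫ t in Set.Ioo (0:ℝ) 1, (f t - h t) * oscKer z t‖ ≤ (ε/2) * eIm := by
    calc ‖∫ t in Set.Ioo (0:ℝ) 1, (f t - h t) * oscKer z t‖
        ≤ ∫ t in Set.Ioo (0:ℝ) 1, ‖(f t - h t) * oscKer z t‖ := norm_integral_le_integral_norm _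
      _ ≤ ∫ t in Set.Ioo (0:ℝ) 1, ‖f t - h t‖ * eIm := by
          apply setIntegral_mono_on
          · exact hsub_int.norm
          · exact ((hf.sub h_int).norm.mul_const eIm)
          · exact measurableSet_Ioo
          · intro t ht
            rw [norm_mul]
            exact mul_le_mul_of_nonneg_left (hE_bd t ht) (norm_nonneg _)
      _ = (∫ t in Set.Ioo (0:ℝ) 1, ‖f t - h t‖) * eIm := by
          rw [integral_mul_const]
      _ ≤ (ε/2) * eIm := by
          apply mul_le_mul_of_nonneg_right _ heIm0.le
          calc (∫ t in Set.Ioo (0:ℝ) 1, ‖f t - h t‖)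
              ≤ ∫ t in Set.Ioo (0:ℝ) 1, (‖f t - g t‖ + ‖g t - h t‖) := by
                apply setIntegral_mono_on
                · exact (hf.sub h_int).norm
                · exact ((hf.sub ((g_cont.integrableOn_Icc (a := 0) (b := 1)).mono_set
                    Set.Ioo_subset_Icc_self)).norm.add
                    (((g_cont.sub h_cont).integrableOn_Icc (a := 0) (b := 1)).mono_set
                    Set.Ioo_subset_Icc_self).norm)
                · exact measurableSet_Ioo
                · intro t _
                  calc ‖f t - h t‖ = ‖(f t - g t) + (g t - h t)‖ := by ring_nf
                    _ ≤ ‖f t - g t‖ + ‖g t - h t‖ := norm_add_le _ _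
            _ = (∫ t in Set.Ioo (0:ℝ) 1, ‖f t - g t‖)
                + ∫ t in Set.Ioo (0:ℝ) 1, ‖g t - h t‖ := by
                apply integral_add
                · exact (hf.sub ((g_cont.integrableOn_Icc (a := 0) (b := 1)).mono_set
                    Set.Ioo_subset_Icc_self)).norm
                · exact (((g_cont.sub h_cont).integrableOn_Icc (a := 0) (b := 1)).mono_set
                    Set.Ioo_subset_Icc_self).norm
            _ ≤ ε/4 + ε/4 := add_le_add hfg_int hgh_int
            _ = ε/2 := by ring
  -- bound the second piece, via integration by parts
  have hB : ‖∫ t in Set.Ioo (0:ℝ) 1, h t * oscKer z t‖ ≤ (ε/2) * eIm := by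
    set v : ℝ → ℂ := fun t => oscKer z t / (2 * Complex.I * z) with hvdef
    have hden : (2 * Complex.I * z) ≠ 0 := by
      simp [Complex.I_ne_zero, hzne]
    have hv_deriv : ∀ t : ℝ, HasDerivAt v (oscKer z t) t := by
      intro t
      have := (oscKer_hasDerivAt z t).div_const (2 * Complex.I * z)
      simpa [mul_div_assoc, mul_div_cancel_right₀ _ hden] using this
    have hv_abs : ∀ t ∈ Set.Icc (0:ℝ) 1, ‖v t‖ ≤ eIm / (2 * ‖z‖) := by
      intro t ht
      rw [hvdef]
      simp only [norm_div, norm_mul, Complex.norm_I, Complex.norm_two]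
      rw [mul_one]
      gcongr
      exact abs_oscKer_le z ht.1 ht.2
    -- convert to interval integral
    have hIoo : (∫ t in Set.Ioo (0:ℝ) 1, h t * oscKer z t)
        = ∫ t in (0:ℝ)..1, h t * oscKer z t := by
      rw [intervalIntegral.integral_of_le (by norm_num : (0:ℝ) ≤ 1),
        ← MeasureTheory.integral_Ioc_eq_integral_Ioo]
    have hparts : (∫ t in (0:ℝ)..1, h t * oscKer z t)
        = h 1 * v 1 - h 0 * v 0 - ∫ t in (0:ℝ)..1, h' t * v t := by
      apply intervalIntegral.integral_mul_deriv_eq_deriv_mul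
      · intro x _; exact h_deriv x
      · intro x _; exact hv_deriv x
      · exact h'_cont.intervalIntegrable 0 1
      · exact hE_cont.intervalIntegrable 0 1
    rw [hIoo, hparts]
    have hb1 : ‖h 1 * v 1‖ ≤ ‖h 1‖ * (eIm / (2 * ‖z‖)) := by
      rw [norm_mul]
      exact mul_le_mul_of_nonneg_left (hv_abs 1 (by norm_num)) (norm_nonneg _)
    have hb0 : ‖h 0 * v 0‖ ≤ ‖h 0‖ * (eIm / (2 * ‖z‖)) := by
      rw [norm_mul]
      exact mul_le_mul_of_nonneg_left (hv_abs 0 (by norm_num)) (norm_nonneg _)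
    have hbI : ‖∫ t in (0:ℝ)..1, h' t * v t‖
        ≤ M * (eIm / (2 * ‖z‖)) := by
      have := intervalIntegral.norm_integral_le_of_norm_le_const
        (C := M * (eIm / (2 * ‖z‖))) (f := fun t => h' t * v t)
        (a := (0:ℝ)) (b := 1) ?_
      · simpa using this
      · intro x hx
        rw [Set.uIoc_of_le (by norm_num : (0:ℝ) ≤ 1)] at hx
        have hx' : x ∈ Set.Icc (0:ℝ) 1 := ⟨hx.1.le, hx.2⟩
        rw [norm_mul]
        exact mul_le_mul (hM x hx') (hv_abs x hx') (norm_nonneg _) hM0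
    calc ‖h 1 * v 1 - h 0 * v 0 - ∫ t in (0:ℝ)..1, h' t * v t‖
        ≤ ‖h 1 * v 1 - h 0 * v 0‖
          + ‖∫ t in (0:ℝ)..1, h' t * v t‖ := norm_sub_le _ _
      _ ≤ (‖h 1 * v 1‖ + ‖h 0 * v 0‖)
          + ‖∫ t in (0:ℝ)..1, h' t * v t‖ := by
          gcongr
          exact norm_sub_le _ _
      _ ≤ C * (eIm / (2 * ‖z‖)) := by
          rw [hCdef]
          have := add_le_add (add_le_add hb1 hb0) hbI
          calc _ ≤ _ := this
            _ = (‖h 1‖ + ‖h 0‖ + M) * (eIm / (2 * ‖z‖)) := by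
              ring
      _ ≤ (ε/2) * eIm := by
          rw [div_eq_mul_inv, ← mul_assoc, mul_comm _ eIm, mul_assoc, mul_comm]
          apply mul_le_mul_of_nonneg_right _ heIm0.le
          rw [mul_inv_le_iff₀ (by positivity)]
          have hzC : C / ε ≤ ‖z‖ := le_trans (le_max_right _ _) hz
          have : C ≤ ε * ‖z‖ := by
            rw [div_le_iff₀ hε] at hzC
            linarith [hzC]
          nlinarith [hzabs, hε]
  -- combine
  calc ‖∫ t in Set.Ioo (0 : ℝ) 1, f t * Complex.exp (Complex.I * z * (2 * t - 1))‖
      = ‖(∫ t in Set.Ioo (0:ℝ) 1, (f t - h t) * oscKer z t)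
        + ∫ t in Set.Ioo (0:ℝ) 1, h t * oscKer z t‖ := by rw [← hsplit]; rfl
    _ ≤ ‖∫ t in Set.Ioo (0:ℝ) 1, (f t - h t) * oscKer z t‖
        + ‖∫ t in Set.Ioo (0:ℝ) 1, h t * oscKer z t‖ := norm_add_le _ _
    _ ≤ (ε/2) * eIm + (ε/2) * eIm := add_le_add hA hB
    _ = ε * Real.exp |z.im| := by rw [heIm]; ring
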